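/- Let R be an n⁴ complex array and m ≥ 2. Then: (i) if R is of real type I, conj(([1,m;R])^{j_1⋯j_m}_{i_1⋯i_m}) = ([1,m;R]^{op})^{i_1⋯i_m}_{j_1⋯j_m} for all multi-indices; (ii) if η is an invertible n×n matrix that is R-covariant, then Σ_{b_1,…,b_m} ([1,m;R])^{a_1⋯a_m}_{b_1⋯b_m} η^{b_1 i_1} ⋯ η^{b_m i_m} = Σ_{b_1,…,b_m} η^{a_1 b_1} ⋯ η^{a_m b_m} ([1,m;R₂₁]^{op})^{i_1⋯i_m}_{b_1⋯b_m}. -/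
import Mathlib


open scoped ComplexConjugate

noncomputable section

/-- An n⁴ array `R^i{}_j{}^k{}_l` viewed as an n²×n² matrix with row index `(i,k)`,
column index `(j,l)`. -/
def toMat (n : ℕ) (R : Fin n → Fin n → Fin n → Fin n → ℂ) :
    Matrix (Fin n × Fin n) (Fin n × Fin n) ℂ :=
  Matrix.of fun p q => R p.1 q.1 p.2 q.2

/-- Entries `(R⁻¹)^i{}_j{}^k{}_l` of the matrix inverse of `R`. -/
def invEntry (n : ℕ) (R : Fin n → Fin n → Fin n → Fin n → ℂ)
    (i j k l : Fin n) : ℂ :=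
  (toMat n R)⁻¹ (i, k) (j, l)

/-- `R` is of real type I: `conj (R^i{}_j{}^k{}_l) = R^l{}_k{}^j{}_i`. -/
def RealTypeI (n : ℕ) (R : Fin n → Fin n → Fin n → Fin n → ℂ) : Prop :=
  ∀ i j k l, conj (R i j k l) = R l k j i

/-- `R` is of antireal type I: `R` invertible and
`conj (R^i{}_j{}^k{}_l) = (R⁻¹)^j{}_i{}^l{}_k`. -/
def AntirealTypeI (n : ℕ) (R : Fin n → Fin n → Fin n → Fin n → ℂ) : Prop :=
  IsUnit (toMat n R) ∧ ∀ i j k l, conj (R i j k l) = invEntry n R j i l k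

/-- `R` is of real type II w.r.t. the involution `σ`:
`conj (R^i{}_j{}^k{}_l) = R^{σk}{}_{σl}{}^{σi}{}_{σj}`. -/
def RealTypeII (n : ℕ) (R : Fin n → Fin n → Fin n → Fin n → ℂ)
    (σ : Fin n → Fin n) : Prop :=
  ∀ i j k l, conj (R i j k l) = R (σ k) (σ l) (σ i) (σ j)

/-- `R` is of antireal type II w.r.t. the involution `σ`: `R` invertible and
`conj (R^i{}_j{}^k{}_l) = (R⁻¹)^{σi}{}_{σj}{}^{σk}{}_{σl}`. -/
def AntirealTypeII (n : ℕ) (R : Fin n → Fin n → Fin n → Fin n → ℂ)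
    (σ : Fin n → Fin n) : Prop :=
  IsUnit (toMat n R) ∧
    ∀ i j k l, conj (R i j k l) = invEntry n R (σ i) (σ j) (σ k) (σ l)

/-- The metric `η` (entries `η^{ij} = η i j`) is `R`-covariant:
`Σ η^{ia} η^{jb} R^k{}_a{}^l{}_b = Σ R^i{}_a{}^j{}_b η^{ak} η^{bl}`. -/
def MetricCovariant (n : ℕ) (R : Fin n → Fin n → Fin n → Fin n → ℂ)
    (η : Matrix (Fin n) (Fin n) ℂ) : Prop :=
  ∀ i j k l, (∑ a : Fin n, ∑ b : Fin n, η i a * η j b * R k a l b) =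
    ∑ a : Fin n, ∑ b : Fin n, R i a j b * η a k * η b l

/-- The metric `η` is real: `conj (η^{ij}) = η_{ji}`, where the lower-index entries
`η_{ij}` are those of the transposed inverse, i.e. `η_{ji} = (η⁻¹) i j`. -/
def MetricReal (n : ℕ) (η : Matrix (Fin n) (Fin n) ℂ) : Prop :=
  ∀ i j, conj (η i j) = η⁻¹ i j

/-- The matrix `PR` on ℂⁿ⊗ℂⁿ: `(PR)^i{}_j{}^k{}_l = R^k{}_j{}^i{}_l`. -/
def PRmat (n : ℕ) (R : Fin n → Fin n → Fin n → Fin n → ℂ) :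
    Matrix (Fin n × Fin n) (Fin n × Fin n) ℂ :=
  Matrix.of fun p q => R p.2 q.1 p.1 q.2

/-- The matrix `A_{k+1,k+2}` on `(ℂⁿ)^{⊗m}` acting as the two-site matrix `A` in the
(0-indexed) tensor factors `k, k+1` and as the identity elsewhere (the identity
matrix if `k+1 ≥ m`). -/
def site (n m : ℕ) (A : Matrix (Fin n × Fin n) (Fin n × Fin n) ℂ) (k : ℕ) :
    Matrix (Fin m → Fin n) (Fin m → Fin n) ℂ :=
  if h : k + 1 < m then
    Matrix.of fun f g =>
      A (f ⟨k, Nat.lt_of_succ_lt h⟩, f ⟨k + 1, h⟩)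
        (g ⟨k, Nat.lt_of_succ_lt h⟩, g ⟨k + 1, h⟩) *
      ∏ t : Fin m,
        (if t.1 = k ∨ t.1 = k + 1 then (1 : ℂ) else if f t = g t then 1 else 0)
  else 1

/-- The ordered product `A_{off+1,off+2} A_{off+2,off+3} ⋯ A_{off+r,off+r+1}`
(1-indexed tensor positions) on `(ℂⁿ)^{⊗m}`; the identity for `r = 0`. -/
def chain (n m : ℕ) (A : Matrix (Fin n × Fin n) (Fin n × Fin n) ℂ)
    (off r : ℕ) : Matrix (Fin m → Fin n) (Fin m → Fin n) ℂ :=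
  ((List.range r).map fun s => site n m A (off + s)).prod

/-- The reversed ordered product `A_{off+r,off+r+1} ⋯ A_{off+2,off+3} A_{off+1,off+2}`
on `(ℂⁿ)^{⊗m}`; the identity for `r = 0`. -/
def chainOp (n m : ℕ) (A : Matrix (Fin n × Fin n) (Fin n × Fin n) ℂ)
    (off r : ℕ) : Matrix (Fin m → Fin n) (Fin m → Fin n) ℂ :=
  (((List.range r).reverse).map fun s => site n m A (off + s)).prod

/-- The braided integer `[k;R]` acting in the tensor factors `off+1,…,off+k`
(1-indexed) of `(ℂⁿ)^{⊗m}`: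
`[k;R] = Σ_{r=0}^{k−1} (PR)_{12}(PR)_{23}⋯(PR)_{r,r+1}` (shifted by `off`). -/
def braidedInt (n m : ℕ) (R : Fin n → Fin n → Fin n → Fin n → ℂ)
    (off k : ℕ) : Matrix (Fin m → Fin n) (Fin m → Fin n) ℂ :=
  ∑ r ∈ Finset.range k, chain n m (PRmat n R) off r

/-- The opposite braided integer `[k;R]^{op}` acting in the tensor factors
`off+1,…,off+k` of `(ℂⁿ)^{⊗m}`:
`[k;R]^{op} = Σ_{r=0}^{k−1} (PR)_{r,r+1}⋯(PR)_{23}(PR)_{12}` (shifted by `off`). -/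
def braidedIntOp (n m : ℕ) (R : Fin n → Fin n → Fin n → Fin n → ℂ)
    (off k : ℕ) : Matrix (Fin m → Fin n) (Fin m → Fin n) ℂ :=
  ∑ r ∈ Finset.range k, chainOp n m (PRmat n R) off r

/-- The braided factorial `[m;R]! = [2;R]_{m−1,m} [3;R]_{m−2,…,m} ⋯ [m;R]_{1,…,m}`
on `(ℂⁿ)^{⊗m}`. -/
def braidedFact (n m : ℕ) (R : Fin n → Fin n → Fin n → Fin n → ℂ) :
    Matrix (Fin m → Fin n) (Fin m → Fin n) ℂ :=
  ((List.range (m - 1)).map fun t => braidedInt n m R (m - (t + 2)) (t + 2)).prod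

/-- The opposite braided factorial
`[m;R]^{op}! = [m;R]^{op}_{1,…,m} ⋯ [3;R]^{op}_{m−2,…,m} [2;R]^{op}_{m−1,m}`. -/
def braidedFactOp (n m : ℕ) (R : Fin n → Fin n → Fin n → Fin n → ℂ) :
    Matrix (Fin m → Fin n) (Fin m → Fin n) ℂ :=
  (((List.range (m - 1)).reverse).map fun t =>
    braidedIntOp n m R (m - (t + 2)) (t + 2)).prod

/-- `R₁₂` on ℂⁿ⊗ℂⁿ⊗ℂⁿ. -/
def Rmat12 (n : ℕ) (R : Fin n → Fin n → Fin n → Fin n → ℂ) :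
    Matrix (Fin n × Fin n × Fin n) (Fin n × Fin n × Fin n) ℂ :=
  Matrix.of fun p q =>
    R p.1 q.1 p.2.1 q.2.1 * (if p.2.2 = q.2.2 then 1 else 0)

/-- `R₁₃` on ℂⁿ⊗ℂⁿ⊗ℂⁿ. -/
def Rmat13 (n : ℕ) (R : Fin n → Fin n → Fin n → Fin n → ℂ) :
    Matrix (Fin n × Fin n × Fin n) (Fin n × Fin n × Fin n) ℂ :=
  Matrix.of fun p q =>
    R p.1 q.1 p.2.2 q.2.2 * (if p.2.1 = q.2.1 then 1 else 0)

/-- `R₂₃` on ℂⁿ⊗ℂⁿ⊗ℂⁿ. -/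
def Rmat23 (n : ℕ) (R : Fin n → Fin n → Fin n → Fin n → ℂ) :
    Matrix (Fin n × Fin n × Fin n) (Fin n × Fin n × Fin n) ℂ :=
  Matrix.of fun p q =>
    (if p.1 = q.1 then (1 : ℂ) else 0) * R p.2.1 q.2.1 p.2.2 q.2.2

/-- The quantum Yang–Baxter equation `R₁₂R₁₃R₂₃ = R₂₃R₁₃R₁₂`. -/
def QYBE (n : ℕ) (R : Fin n → Fin n → Fin n → Fin n → ℂ) : Prop :=
  Rmat12 n R * Rmat13 n R * Rmat23 n R = Rmat23 n R * Rmat13 n R * Rmat12 n R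

/-- The array `R₂₁`, with `R₂₁^i{}_j{}^k{}_l = R^k{}_l{}^i{}_j`. -/
def swapR (n : ℕ) (R : Fin n → Fin n → Fin n → Fin n → ℂ) :
    Fin n → Fin n → Fin n → Fin n → ℂ :=
  fun i j k l => R k l i j

namespace Stmt18Aux

open Finset Matrix

variable {n m : ℕ}

lemma delta_eq (k : ℕ) (f g : Fin m → Fin n) :
    (∏ t : Fin m,
      (if t.1 = k ∨ t.1 = k + 1 then (1 : ℂ) else if f t = g t then 1 else 0)) =
    if ∀ t : Fin m, ¬(t.1 = k ∨ t.1 = k + 1) → f t = g t then 1 else 0 := by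
  split_ifs with h
  · refine Finset.prod_eq_one fun t _ => ?_
    by_cases ht : t.1 = k ∨ t.1 = k + 1
    · simp [ht]
    · simp [ht, h t ht]
  · push_neg at h
    obtain ⟨t, ht, hne⟩ := h
    exact Finset.prod_eq_zero (Finset.mem_univ t) (by simp [ht, hne])

lemma delta_eq' (k : ℕ) (f g : Fin m → Fin n) :
    (∏ t : Fin m,
      (if t.1 = k ∨ t.1 = k + 1 then (1 : ℂ) else if g t = f t then 1 else 0)) =
    if ∀ t : Fin m, ¬(t.1 = k ∨ t.1 = k + 1) → f t = g t then 1 else 0 := by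
  rw [← delta_eq k f g]
  exact Finset.prod_congr rfl fun t _ => by simp [eq_comm]

lemma sum_two_free {k : ℕ} (hk : k + 1 < m) (f : Fin m → Fin n)
    (F : (Fin m → Fin n) → ℂ) :
    (∑ g : Fin m → Fin n,
      (if ∀ t : Fin m, ¬(t.1 = k ∨ t.1 = k + 1) → f t = g t then (1 : ℂ) else 0) * F g) =
    ∑ a : Fin n, ∑ b : Fin n,
      F (Function.update (Function.update f ⟨k, Nat.lt_of_succ_lt hk⟩ a) ⟨k + 1, hk⟩ b) := by
  classical
  have hK : k < m := Nat.lt_of_succ_lt hk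
  set K : Fin m := ⟨k, hK⟩ with hKdef
  set K1 : Fin m := ⟨k + 1, hk⟩ with hK1def
  have hKK1 : K ≠ K1 := by simp [hKdef, hK1def, Fin.ext_iff]
  set e : Fin n × Fin n → (Fin m → Fin n) :=
    fun p => Function.update (Function.update f K p.1) K1 p.2 with he
  have heK : ∀ p, e p K = p.1 := fun p => by
    simp [he, Function.update_of_ne hKK1]
  have heK1 : ∀ p, e p K1 = p.2 := fun p => by simp [he]
  have heother : ∀ p (t : Fin m), t ≠ K → t ≠ K1 → e p t = f t := fun p t h1 h2 => by
    simp [he, Function.update_of_ne h2, Function.update_of_ne h1]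
  have hinj : Function.Injective e := by
    intro p q hpq
    have h1 := congrFun hpq K
    have h2 := congrFun hpq K1
    rw [heK, heK] at h1; rw [heK1, heK1] at h2
    exact Prod.ext h1 h2
  have hcond : ∀ t : Fin m, ¬(t.1 = k ∨ t.1 = k + 1) ↔ t ≠ K ∧ t ≠ K1 := by
    intro t; simp [hKdef, hK1def, Fin.ext_iff, not_or]
  have himg : Finset.univ.filter
      (fun g : Fin m → Fin n => ∀ t : Fin m, ¬(t.1 = k ∨ t.1 = k + 1) → f t = g t) =
      Finset.univ.image e := by
    ext g
    simp only [Finset.mem_filter, Finset.mem_univ, true_and, Finset.mem_image]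
    constructor
    · intro hg
      refine ⟨(g K, g K1), funext fun t => ?_⟩
      by_cases h1 : t = K1
      · subst h1; rw [heK1]
      · by_cases h2 : t = K
        · subst h2; rw [heK]
        · rw [heother _ _ h2 h1]
          exact hg t ((hcond t).2 ⟨h2, h1⟩)
    · rintro ⟨p, rfl⟩ t ht
      exact (heother p t ((hcond t).1 ht).1 ((hcond t).1 ht).2).symm
  have h1 : (∑ g : Fin m → Fin n,
      (if ∀ t : Fin m, ¬(t.1 = k ∨ t.1 = k + 1) → f t = g t then (1 : ℂ) else 0) * F g) =
      ∑ g ∈ Finset.univ.filter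
        (fun g : Fin m → Fin n => ∀ t : Fin m, ¬(t.1 = k ∨ t.1 = k + 1) → f t = g t), F g := by
    rw [Finset.sum_filter]
    exact Finset.sum_congr rfl fun g _ => by split_ifs <;> simp
  rw [h1, himg, Finset.sum_image (fun p _ q _ h => hinj h), Fintype.sum_prod_type]

lemma prod_split {k : ℕ} (hk : k + 1 < m) (h : Fin m → ℂ) :
    (∏ t : Fin m, h t) =
      h ⟨k, Nat.lt_of_succ_lt hk⟩ * (h ⟨k + 1, hk⟩ *
        ∏ t ∈ (Finset.univ.erase ⟨k, Nat.lt_of_succ_lt hk⟩).erase ⟨k + 1, hk⟩, h t) := by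
  rw [← Finset.mul_prod_erase Finset.univ h (Finset.mem_univ ⟨k, Nat.lt_of_succ_lt hk⟩)]
  congr 1
  have hmem : (⟨k + 1, hk⟩ : Fin m) ∈ Finset.univ.erase ⟨k, Nat.lt_of_succ_lt hk⟩ :=
    Finset.mem_erase.2 ⟨by simp only [ne_eq, Fin.mk.injEq]; omega, Finset.mem_univ _⟩
  rw [← Finset.mul_prod_erase _ h hmem]

lemma site_comm (η : Matrix (Fin n) (Fin n) ℂ)
    (A B : Matrix (Fin n × Fin n) (Fin n × Fin n) ℂ)
    (hAB : ∀ c d u v : Fin n,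
      (∑ a : Fin n, ∑ b : Fin n, A (c, d) (a, b) * η a u * η b v) =
      ∑ a : Fin n, ∑ b : Fin n, η c a * η d b * B (a, b) (u, v))
    (k : ℕ) :
    site n m A k * (Matrix.of fun a b : Fin m → Fin n => ∏ t, η (a t) (b t)) =
      (Matrix.of fun a b : Fin m → Fin n => ∏ t, η (a t) (b t)) * site n m B k := by
  classical
  by_cases hk : k + 1 < m
  · ext f i
    have hK : k < m := Nat.lt_of_succ_lt hk
    set K : Fin m := ⟨k, hK⟩ with hKdef
    set K1 : Fin m := ⟨k + 1, hk⟩ with hK1def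
    have hKK1 : K ≠ K1 := by simp [hKdef, hK1def, Fin.ext_iff]
    set C : ℂ := ∏ t ∈ (Finset.univ.erase K).erase K1, η (f t) (i t) with hC
    rw [Matrix.mul_apply, Matrix.mul_apply]
    have lhs1 : (∑ g : Fin m → Fin n, site n m A k f g *
        (Matrix.of fun a b : Fin m → Fin n => ∏ t, η (a t) (b t)) g i) =
        ∑ a : Fin n, ∑ b : Fin n, A (f K, f K1) (a, b) * η a (i K) * η b (i K1) * C := by
      have : ∀ g : Fin m → Fin n, site n m A k f g *
          (Matrix.of fun a b : Fin m → Fin n => ∏ t, η (a t) (b t)) g i =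
          (if ∀ t : Fin m, ¬(t.1 = k ∨ t.1 = k + 1) → f t = g t then (1 : ℂ) else 0) *
            (A (f K, f K1) (g K, g K1) * ∏ t, η (g t) (i t)) := by
        intro g
        rw [site, dif_pos hk, Matrix.of_apply, Matrix.of_apply, delta_eq]
        ring
      rw [Finset.sum_congr rfl fun g _ => this g, sum_two_free hk f]
      refine Finset.sum_congr rfl fun a _ => Finset.sum_congr rfl fun b _ => ?_
      set e : Fin m → Fin n := Function.update (Function.update f K a) K1 b with he
      have heK : e K = a := by simp [he, Function.update_of_ne hKK1]
      have heK1 : e K1 = b := by simp [he]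
      have hrest : ∀ t ∈ (Finset.univ.erase K).erase K1, η (e t) (i t) = η (f t) (i t) := by
        intro t ht
        have h1 := (Finset.mem_erase.1 ht).1
        have h2 := (Finset.mem_erase.1 (Finset.mem_erase.1 ht).2).1
        rw [he, Function.update_of_ne h1, Function.update_of_ne h2]
      rw [prod_split hk (fun t => η (e t) (i t))]
      show A (f K, f K1) (e K, e K1) * (η (e K) (i K) * (η (e K1) (i K1) * _)) = _
      rw [heK, heK1, Finset.prod_congr rfl hrest, ← hC]
      ring
    have rhs1 : (∑ g : Fin m → Fin n,
        (Matrix.of fun a b : Fin m → Fin n => ∏ t, η (a t) (b t)) f g * site n m B k g i) =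
        ∑ a : Fin n, ∑ b : Fin n, η (f K) a * η (f K1) b * B (a, b) (i K, i K1) * C := by
      have : ∀ g : Fin m → Fin n,
          (Matrix.of fun a b : Fin m → Fin n => ∏ t, η (a t) (b t)) f g * site n m B k g i =
          (if ∀ t : Fin m, ¬(t.1 = k ∨ t.1 = k + 1) → i t = g t then (1 : ℂ) else 0) *
            ((∏ t, η (f t) (g t)) * B (g K, g K1) (i K, i K1)) := by
        intro g
        rw [site, dif_pos hk, Matrix.of_apply, Matrix.of_apply, delta_eq']
        ring
      rw [Finset.sum_congr rfl fun g _ => this g, sum_two_free hk i]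
      refine Finset.sum_congr rfl fun a _ => Finset.sum_congr rfl fun b _ => ?_
      set e : Fin m → Fin n := Function.update (Function.update i K a) K1 b with he
      have heK : e K = a := by simp [he, Function.update_of_ne hKK1]
      have heK1 : e K1 = b := by simp [he]
      have hrest : ∀ t ∈ (Finset.univ.erase K).erase K1, η (f t) (e t) = η (f t) (i t) := by
        intro t ht
        have h1 := (Finset.mem_erase.1 ht).1
        have h2 := (Finset.mem_erase.1 (Finset.mem_erase.1 ht).2).1
        rw [he, Function.update_of_ne h1, Function.update_of_ne h2]
      rw [prod_split hk (fun t => η (f t) (e t))]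
      show (η (f K) (e K) * (η (f K1) (e K1) * _)) * B (e K, e K1) (i K, i K1) = _
      rw [heK, heK1, Finset.prod_congr rfl hrest, ← hC]
      ring
    rw [lhs1, rhs1]
    have l2 : (∑ a : Fin n, ∑ b : Fin n, A (f K, f K1) (a, b) * η a (i K) * η b (i K1) * C) =
        (∑ a : Fin n, ∑ b : Fin n, A (f K, f K1) (a, b) * η a (i K) * η b (i K1)) * C := by
      rw [Finset.sum_mul]
      exact Finset.sum_congr rfl fun a _ => (Finset.sum_mul _ _ _).symm
    have r2 : (∑ a : Fin n, ∑ b : Fin n, η (f K) a * η (f K1) b * B (a, b) (i K, i K1) * C) =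
        (∑ a : Fin n, ∑ b : Fin n, η (f K) a * η (f K1) b * B (a, b) (i K, i K1)) * C := by
      rw [Finset.sum_mul]
      exact Finset.sum_congr rfl fun a _ => (Finset.sum_mul _ _ _).symm
    rw [l2, r2, hAB (f K) (f K1) (i K) (i K1)]
  · simp [site, hk]

lemma chain_step (A : Matrix (Fin n × Fin n) (Fin n × Fin n) ℂ) (r : ℕ) :
    chain n m A 0 (r + 1) = chain n m A 0 r * site n m A (0 + r) := by
  rw [chain, chain, List.range_succ, List.map_append, List.prod_append]
  simp

lemma chain_comm (Eta : Matrix (Fin m → Fin n) (Fin m → Fin n) ℂ)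
    (A B : Matrix (Fin n × Fin n) (Fin n × Fin n) ℂ)
    (h : ∀ k, site n m A k * Eta = Eta * site n m B k) (r : ℕ) :
    chain n m A 0 r * Eta = Eta * chain n m B 0 r := by
  induction r with
  | zero => simp [chain]
  | succ r ih =>
    rw [chain_step, chain_step, mul_assoc, h, ← mul_assoc, ih, mul_assoc]

lemma site_transpose (A : Matrix (Fin n × Fin n) (Fin n × Fin n) ℂ) (k : ℕ) :
    (site n m A k)ᵀ = site n m Aᵀ k := by
  by_cases hk : k + 1 < m
  · ext f g
    simp only [Matrix.transpose_apply, site, dif_pos hk, Matrix.of_apply]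
    congr 1
    exact Finset.prod_congr rfl fun t _ => by simp [eq_comm]
  · simp [site, hk]

lemma chainOp_transpose (A : Matrix (Fin n × Fin n) (Fin n × Fin n) ℂ) (r : ℕ) :
    (chainOp n m A 0 r)ᵀ = chain n m Aᵀ 0 r := by
  rw [chainOp, Matrix.transpose_list_prod, List.map_map, ← List.map_reverse,
    List.reverse_reverse, chain]
  exact congrArg List.prod (List.map_congr_left fun s _ => site_transpose A (0 + s))

lemma site_herm (R : Fin n → Fin n → Fin n → Fin n → ℂ) (hR : RealTypeI n R) (k : ℕ) :
    (site n m (PRmat n R) k)ᴴ = site n m (PRmat n R) k := by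
  by_cases hk : k + 1 < m
  · ext f g
    simp only [Matrix.conjTranspose_apply, site, dif_pos hk, Matrix.of_apply]
    rw [star_mul']
    congr 1
    · exact hR _ _ _ _
    · rw [star_prod]
      refine Finset.prod_congr rfl fun t _ => ?_
      by_cases ht : t.1 = k ∨ t.1 = k + 1
      · simp [ht]
      · by_cases h2 : f t = g t
        · simp [ht, h2]
        · simp [ht, h2, Ne.symm h2]
  · simp [site, hk]

lemma chain_herm (R : Fin n → Fin n → Fin n → Fin n → ℂ) (hR : RealTypeI n R) (r : ℕ) :
    (chain n m (PRmat n R) 0 r)ᴴ = chainOp n m (PRmat n R) 0 r := by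
  rw [chain, Matrix.conjTranspose_list_prod, List.map_map, ← List.map_reverse, chainOp]
  exact congrArg List.prod (List.map_congr_left fun s _ => site_herm R hR (0 + s))

end Stmt18Aux

/-- for `m ≥ 2`: (i) if `R` is of real type I, then
`conj(([1,m;R])^{j_1⋯j_m}_{i_1⋯i_m}) = ([1,m;R]^{op})^{i_1⋯i_m}_{j_1⋯j_m}`;
(ii) if `η` is an invertible `R`-covariant matrix, then
`Σ_b ([1,m;R])^{a}_{b} η^{b_1 i_1}⋯η^{b_m i_m}
 = Σ_b η^{a_1 b_1}⋯η^{a_m b_m} ([1,m;R₂₁]^{op})^{i}_{b}`.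
Here `[1,m;R] = (PR)_{12}⋯(PR)_{m−1,m}` and `[1,m;R]^{op} = (PR)_{m−1,m}⋯(PR)_{12}`. -/
theorem stmt18 (n : ℕ) (hn : 1 ≤ n)
    (R : Fin n → Fin n → Fin n → Fin n → ℂ)
    (m : ℕ) (hm : 2 ≤ m) :
    (RealTypeI n R →
      ∀ j i : Fin m → Fin n,
        conj (chain n m (PRmat n R) 0 (m - 1) j i) =
          chainOp n m (PRmat n R) 0 (m - 1) i j) ∧
    (∀ η : Matrix (Fin n) (Fin n) ℂ, IsUnit η → MetricCovariant n R η →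
      ∀ a i : Fin m → Fin n,
        (∑ b : Fin m → Fin n,
          chain n m (PRmat n R) 0 (m - 1) a b * ∏ t : Fin m, η (b t) (i t)) =
        ∑ b : Fin m → Fin n,
          (∏ t : Fin m, η (a t) (b t)) *
            chainOp n m (PRmat n (swapR n R)) 0 (m - 1) i b) := by
  classical
  constructor
  · intro hR j i
    have h := Stmt18Aux.chain_herm (m := m) R hR (m - 1)
    calc conj (chain n m (PRmat n R) 0 (m - 1) j i)
        = Matrix.conjTranspose (chain n m (PRmat n R) 0 (m - 1)) i j := rfl
      _ = chainOp n m (PRmat n R) 0 (m - 1) i j := by rw [h]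
  · intro η hη hcov a i
    set Eta : Matrix (Fin m → Fin n) (Fin m → Fin n) ℂ :=
      Matrix.of fun a b : Fin m → Fin n => ∏ t, η (a t) (b t) with hEta
    have hAB : ∀ c d u v : Fin n,
        (∑ x : Fin n, ∑ b : Fin n, PRmat n R (c, d) (x, b) * η x u * η b v) =
        ∑ x : Fin n, ∑ b : Fin n,
          η c x * η d b * (Matrix.transpose (PRmat n (swapR n R))) (x, b) (u, v) := by
      intro c d u v
      have hc := hcov d c u v
      calc (∑ x : Fin n, ∑ b : Fin n, PRmat n R (c, d) (x, b) * η x u * η b v)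
          = ∑ x : Fin n, ∑ b : Fin n, R d x c b * η x u * η b v := rfl
        _ = ∑ x : Fin n, ∑ b : Fin n, η d x * η c b * R u x v b := hc.symm
        _ = ∑ b : Fin n, ∑ x : Fin n, η d x * η c b * R u x v b := Finset.sum_comm
        _ = ∑ x : Fin n, ∑ b : Fin n, η c x * η d b * (Matrix.transpose (PRmat n (swapR n R))) (x, b) (u, v) := by
            refine Finset.sum_congr rfl fun x _ => Finset.sum_congr rfl fun b _ => ?_
            show η d b * η c x * R u b v x = η c x * η d b * PRmat n (swapR n R) (u, v) (x, b)
            rw [PRmat, Matrix.of_apply]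
            show η d b * η c x * R u b v x = η c x * η d b * swapR n R v x u b
            rw [swapR]
            ring
    have hcomm := Stmt18Aux.chain_comm (m := m) Eta (PRmat n R) (Matrix.transpose (PRmat n (swapR n R)))
      (fun k => Stmt18Aux.site_comm η _ _ hAB k) (m - 1)
    have hT := Stmt18Aux.chainOp_transpose (m := m) (PRmat n (swapR n R)) (m - 1)
    calc (∑ b : Fin m → Fin n,
          chain n m (PRmat n R) 0 (m - 1) a b * ∏ t : Fin m, η (b t) (i t))
        = (chain n m (PRmat n R) 0 (m - 1) * Eta) a i := by rw [Matrix.mul_apply]; rfl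
      _ = (Eta * chain n m (Matrix.transpose (PRmat n (swapR n R))) 0 (m - 1)) a i := by rw [hcomm]
      _ = ∑ b : Fin m → Fin n,
          (∏ t : Fin m, η (a t) (b t)) * chainOp n m (PRmat n (swapR n R)) 0 (m - 1) i b := by
            rw [Matrix.mul_apply, ← hT]
            rfl
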